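/- Suppose smooth real-valued functions a₁, a₂, a₀ on a connected manifold satisfy the system da₁ = (a₀² - a₁² - 3)ω¹ - a₁a₂ω² - a₂φ, da₂ = -a₁a₂ω¹ + (a₀² - a₂² - 3)ω² + a₁φ, da₀ = -2a₀a₁ω¹ - 2a₀a₂ω² for some 1-forms ω¹, ω², φ. Then the function a₀/(a₀² + a₁² + a₂² + 3) is constant. -/

import Mathlib

/-- Theorem 6.3(a), conserved quantity: if smooth functions `a₁ a₂ a₀` satisfy the
system (6.2), i.e.
`da₁ = (a₀²-a₁²-3)ω¹ - a₁a₂ω² - a₂φ`,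
`da₂ = -a₁a₂ω¹ + (a₀²-a₂²-3)ω² + a₁φ`,
`da₀ = -2a₀a₁ω¹ - 2a₀a₂ω² `
for some 1-forms `ω¹, ω², φ`, on a connected open set, then
`a₀/(a₀² + a₁² + a₂² + 3)` is constant there. -/
theorem stmt_14 {E : Type*} [NormedAddCommGroup E] [NormedSpace ℝ E]
    (s : Set E) (hs : IsOpen s) (hconn : IsConnected s)
    (a₁ a₂ a₀ : E → ℝ) (ω₁ ω₂ φ : E → (E →L[ℝ] ℝ))
    (h₁ : ∀ x ∈ s, HasFDerivAt a₁
      ((a₀ x ^ 2 - a₁ x ^ 2 - 3) • ω₁ x - (a₁ x * a₂ x) • ω₂ x - a₂ x • φ x) x)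
    (h₂ : ∀ x ∈ s, HasFDerivAt a₂
      (-(a₁ x * a₂ x) • ω₁ x + (a₀ x ^ 2 - a₂ x ^ 2 - 3) • ω₂ x + a₁ x • φ x) x)
    (h₀ : ∀ x ∈ s, HasFDerivAt a₀
      (-(2 * a₀ x * a₁ x) • ω₁ x - (2 * a₀ x * a₂ x) • ω₂ x) x) :
    ∀ x ∈ s, ∀ y ∈ s,
      a₀ x / (a₀ x ^ 2 + a₁ x ^ 2 + a₂ x ^ 2 + 3) =
      a₀ y / (a₀ y ^ 2 + a₁ y ^ 2 + a₂ y ^ 2 + 3) := by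
  set f : E → ℝ := fun x => a₀ x / (a₀ x ^ 2 + a₁ x ^ 2 + a₂ x ^ 2 + 3) with hfdef
  have hQpos : ∀ x, 0 < a₀ x ^ 2 + a₁ x ^ 2 + a₂ x ^ 2 + 3 := fun x => by positivity
  have hf0 : ∀ x ∈ s, HasFDerivAt f (0 : E →L[ℝ] ℝ) x := by
    intro x hx
    have d₀ := h₀ x hx
    have d₁ := h₁ x hx
    have d₂ := h₂ x hx
    have sq : ∀ (g : E → ℝ) (g' : E →L[ℝ] ℝ), HasFDerivAt g g' x →
        HasFDerivAt (fun y => g y ^ 2) ((2 * g x) • g') x := by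
      intro g g' hg
      have h := hg.mul hg
      simp only [pow_two]
      refine h.congr_fderiv ?_
      ext v
      simp only [ContinuousLinearMap.add_apply, ContinuousLinearMap.smul_apply, smul_eq_mul]
      ring
    have hQ : HasFDerivAt (fun y => a₀ y ^ 2 + a₁ y ^ 2 + a₂ y ^ 2 + 3)
        ((2 * a₀ x) • (-(2 * a₀ x * a₁ x) • ω₁ x - (2 * a₀ x * a₂ x) • ω₂ x)
          + (2 * a₁ x) • ((a₀ x ^ 2 - a₁ x ^ 2 - 3) • ω₁ x - (a₁ x * a₂ x) • ω₂ x - a₂ x • φ x)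
          + (2 * a₂ x) • (-(a₁ x * a₂ x) • ω₁ x + (a₀ x ^ 2 - a₂ x ^ 2 - 3) • ω₂ x + a₁ x • φ x)) x :=
      (((sq _ _ d₀).add (sq _ _ d₁)).add (sq _ _ d₂)).add_const 3
    have hne := (hQpos x).ne'
    have hinv := (hasDerivAt_inv hne).comp_hasFDerivAt x hQ
    have hmul := d₀.mul hinv
    have hfun : f = fun y => a₀ y * (a₀ y ^ 2 + a₁ y ^ 2 + a₂ y ^ 2 + 3)⁻¹ := by
      funext y; simp [hfdef, div_eq_mul_inv]
    rw [hfun]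
    refine hmul.congr_fderiv ?_
    ext v
    simp only [ContinuousLinearMap.zero_apply, ContinuousLinearMap.add_apply,
      ContinuousLinearMap.smul_apply, ContinuousLinearMap.sub_apply,
      ContinuousLinearMap.neg_apply, smul_eq_mul, Function.comp_apply]
    have hQne : (a₀ x ^ 2 + a₁ x ^ 2 + a₂ x ^ 2 + 3) ≠ 0 := hne
    field_simp
    ring
  -- local constancy
  have hloc : ∀ x ∈ s, ∀ᶠ y in nhds x, f y = f x := by
    intro x hx
    obtain ⟨ε, hε, hball⟩ := Metric.isOpen_iff.1 hs x hx
    have hconst : ∀ y ∈ Metric.ball x ε, f y = f x := by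
      intro y hy
      refine (convex_ball x ε).is_const_of_fderivWithin_eq_zero
        (fun z hz => ((hf0 z (hball hz)).differentiableAt).differentiableWithinAt)
        (fun z hz => ?_) hy (Metric.mem_ball_self hε)
      rw [fderivWithin_of_isOpen Metric.isOpen_ball hz, (hf0 z (hball hz)).fderiv]
    exact Filter.eventually_of_mem (Metric.ball_mem_nhds x hε) hconst
  -- globalize via connectedness
  intro x hx y hy
  haveI : PreconnectedSpace s := Subtype.preconnectedSpace hconn.isPreconnected
  have hlc : IsLocallyConstant (fun z : s => f z) := by
    rw [IsLocallyConstant.iff_eventually_eq]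
    intro z
    exact (continuous_subtype_val.continuousAt (x := z)).eventually (hloc z.1 z.2)
  exact hlc.apply_eq_of_preconnectedSpace ⟨x, hx⟩ ⟨y, hy⟩
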